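/- For every fixed integer r, there is a constant C such that for all odd primes p not dividing r, the Haar measure of the set of triples (a,b,c) ∈ ℤ_p³ with ab+r, bc+r, ac+r all squares in ℤ_p differs from 1/8 by at most C/p. -/

import Mathlib

open MeasureTheory

noncomputable instance (p : ℕ) [Fact p.Prime] : MeasurableSpace ℤ_[p] := borel _
instance (p : ℕ) [Fact p.Prime] : BorelSpace ℤ_[p] := ⟨rfl⟩

/-- The Haar measure on ℤ_p, normalized so that μ(ℤ_p) = 1. -/
noncomputable def μZp (p : ℕ) [Fact p.Prime] : Measure ℤ_[p] :=
  Measure.addHaarMeasure ⊤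

open Finset


section CharSum
variable {p : ℕ} [Fact p.Prime]

local notation "χ" => quadraticChar (ZMod p)

lemma chi_abs (x : ZMod p) : |χ x| ≤ 1 := by
  rcases quadraticChar_isQuadratic (ZMod p) x with h | h | h <;> rw [h] <;> norm_num

lemma sum_affine (f : ZMod p → ℤ) {α : ZMod p} (hα : α ≠ 0) (γ : ZMod p) :
    ∑ c : ZMod p, f (α * c + γ) = ∑ u : ZMod p, f u := by
  apply Fintype.sum_bijective ((Equiv.mulLeft₀ α hα).trans (Equiv.addRight γ))
    (Equiv.bijective _) _ _ (fun c => rfl)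

lemma chi_sum_affine (hp2 : p ≠ 2) {α : ZMod p} (hα : α ≠ 0) (γ : ZMod p) :
    ∑ c : ZMod p, χ (α * c + γ) = 0 := by
  rw [sum_affine (fun u => χ u) hα γ]
  exact quadraticChar_sum_zero (by rwa [ZMod.ringChar_zmod_n])

lemma key_sum (hp2 : p ≠ 2) {s : ZMod p} (hs : s ≠ 0) :
    ∑ u : ZMod p, χ u * χ (u + s) = -1 := by
  have h0 : ∑ u : ZMod p, χ u * χ (u + s)
      = ∑ u ∈ univ.erase (0 : ZMod p), χ u * χ (u + s) := by
    rw [Finset.sum_erase]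
    simp
  have h1 : ∀ u ∈ univ.erase (0 : ZMod p), χ u * χ (u + s) = χ (1 + s * u⁻¹) := by
    intro u hu
    have hu0 : u ≠ 0 := by simpa using (Finset.mem_erase.mp hu).1
    have : (1 : ZMod p) + s * u⁻¹ = u⁻¹ * (u + s) := by field_simp
    rw [this, map_mul]
    have hsq : χ u * χ u⁻¹ = 1 := by
      rw [← map_mul, mul_inv_cancel₀ hu0, map_one]
    rcases quadraticChar_isQuadratic (ZMod p) u with h | h | h
    · exact absurd (quadraticChar_eq_zero_iff.mp h) hu0
    · rw [h] at hsq ⊢; rw [one_mul] at hsq; rw [hsq]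
    · rw [h] at hsq ⊢
      have h2 : χ u⁻¹ = -1 := by linarith
      rw [h2]
  rw [h0, Finset.sum_congr rfl h1]
  have h2 : ∑ u ∈ univ.erase (0 : ZMod p), χ (1 + s * u⁻¹)
      = ∑ v ∈ univ.erase (1 : ZMod p), χ v := by
    apply Finset.sum_nbij' (fun u => 1 + s * u⁻¹) (fun v => s * (v - 1)⁻¹)
    · intro u hu
      have hu0 : u ≠ 0 := by simpa using (Finset.mem_erase.mp hu).1
      simp only [Finset.mem_erase, Finset.mem_univ, and_true]
      intro h
      have : s * u⁻¹ = 0 := by linear_combination h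
      rcases mul_eq_zero.mp this with h' | h'
      · exact hs h'
      · exact hu0 (by simpa using h')
    · intro v hv
      have hv1 : v ≠ 1 := by simpa using (Finset.mem_erase.mp hv).1
      simp only [Finset.mem_erase, Finset.mem_univ, and_true]
      intro h
      rcases mul_eq_zero.mp h with h' | h'
      · exact hs h'
      · exact hv1 (by
          have := inv_eq_zero.mp h'
          have : v = 1 := by linear_combination this
          exact this)
    · intro u hu
      have hu0 : u ≠ 0 := by simpa using (Finset.mem_erase.mp hu).1
      field_simp
      simp [hs]
    · intro v hv
      have hv1 : v ≠ 1 := by simpa using (Finset.mem_erase.mp hv).1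
      have h0 : v - 1 ≠ 0 := sub_ne_zero.mpr hv1
      field_simp
      ring
    · intro u hu; rfl
  rw [h2, Finset.sum_erase_eq_sub (by simp)]
  rw [quadraticChar_sum_zero (by rwa [ZMod.ringChar_zmod_n]), map_one]
  ring

-- pair sum bound
lemma pair_sum_le (hp2 : p ≠ 2) {α β : ZMod p} (γ δ : ZMod p) (hα : α ≠ 0) (hβ : β ≠ 0)
    (hdisc : α * δ - β * γ ≠ 0) :
    |∑ c : ZMod p, χ (α * c + γ) * χ (β * c + δ)| ≤ 1 := by
  have hstep : ∑ c : ZMod p, χ (α * c + γ) * χ (β * c + δ)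
      = ∑ u : ZMod p, χ u * χ (β * α⁻¹ * u + (δ - β * γ * α⁻¹)) := by
    rw [← sum_affine (fun u => χ u * χ (β * α⁻¹ * u + (δ - β * γ * α⁻¹))) hα γ]
    apply Finset.sum_congr rfl
    intro c _
    congr 2
    field_simp
    ring
  have hs : (δ - β * γ * α⁻¹) * α * β⁻¹ ≠ 0 := by
    apply mul_ne_zero (mul_ne_zero ?_ hα) (inv_ne_zero hβ)
    intro h
    apply hdisc
    have : (δ - β * γ * α⁻¹) * α = α * δ - β * γ := by field_simp
    rw [← this, h, zero_mul]
  have hfac : ∀ u : ZMod p, χ (β * α⁻¹ * u + (δ - β * γ * α⁻¹))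
      = χ (β * α⁻¹) * χ (u + (δ - β * γ * α⁻¹) * α * β⁻¹) := by
    intro u
    rw [← map_mul]
    congr 1
    field_simp
  rw [hstep]
  simp_rw [hfac]
  have : ∑ u : ZMod p, χ u * (χ (β * α⁻¹) * χ (u + (δ - β * γ * α⁻¹) * α * β⁻¹))
      = χ (β * α⁻¹) * ∑ u : ZMod p, χ u * χ (u + (δ - β * γ * α⁻¹) * α * β⁻¹) := by
    rw [Finset.mul_sum]; apply Finset.sum_congr rfl; intro u _; ring
  rw [this, key_sum hp2 hs, abs_mul]
  calc |χ (β * α⁻¹)| * |(-1 : ℤ)| ≤ 1 * 1 := by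
        rw [abs_neg, abs_one]; exact mul_le_one₀ (chi_abs _) (by norm_num) le_rfl
    _ = 1 := by norm_num

lemma pair_sum_trivial (f g : ZMod p → ℤ) (hf : ∀ x, |f x| ≤ 1) (hg : ∀ x, |g x| ≤ 1) :
    |∑ c : ZMod p, f c * g c| ≤ p := by
  calc |∑ c : ZMod p, f c * g c| ≤ ∑ c : ZMod p, |f c * g c| := Finset.abs_sum_le_sum_abs _ _
    _ ≤ ∑ _c : ZMod p, 1 := by
        apply Finset.sum_le_sum
        intro c _
        rw [abs_mul]
        exact mul_le_one₀ (hf c) (abs_nonneg _) (hg c)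
    _ = p := by simp [ZMod.card]

-- delta function
lemma delta_sum_le {r : ZMod p} (hr : r ≠ 0) (a : ZMod p) :
    ∑ b : ZMod p, (if a * b + r = 0 then (1 : ℤ) else 0) ≤ 1 := by
  by_cases ha : a = 0
  · simp [ha, hr]
  · have : ∀ b : ZMod p, (a * b + r = 0) ↔ (b = -r * a⁻¹) := by
      intro b
      constructor
      · intro h
        field_simp
        linear_combination h
      · intro h
        rw [h]
        field_simp
        ring
    simp_rw [this]
    rw [Finset.sum_ite_eq' Finset.univ (-r * a⁻¹) (fun _ => (1:ℤ))]
    simp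

end CharSum

section Count
variable {p : ℕ} [Fact p.Prime]
local notation "χ" => quadraticChar (ZMod p)
variable {r : ZMod p}

noncomputable def Efun (u : ZMod p) : ℤ := 1 + χ u - (if u = 0 then 1 else 0)

lemma Efun_eq (u : ZMod p) [Decidable (IsSquare u)] :
    Efun u = if u ≠ 0 ∧ IsSquare u then 2 else 0 := by
  unfold Efun
  by_cases h0 : u = 0
  · simp [h0, quadraticChar_zero]
  · rcases quadraticChar_isQuadratic (ZMod p) u with h | h | h
    · exact absurd (quadraticChar_eq_zero_iff.mp h) h0
    · have hsq : IsSquare u := (quadraticChar_one_iff_isSquare h0).mp h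
      simp [h0, h, hsq]
    · have hsq : ¬ IsSquare u := by
        intro hs
        rw [(quadraticChar_one_iff_isSquare h0).mpr hs] at h
        norm_num at h
      simp [h0, h, hsq]

lemma Efun_abs (u : ZMod p) : |Efun u| ≤ 2 := by
  unfold Efun
  have := chi_abs u
  rcases abs_le.mp this with ⟨h1, h2⟩
  split_ifs <;> rw [abs_le] <;> constructor <;> linarith

lemma f_abs (u : ZMod p) : |1 + χ u| ≤ 2 := by
  rcases abs_le.mp (chi_abs u) with ⟨h1, h2⟩
  rw [abs_le]; constructor <;> linarith

lemma Efun_sub_f (u : ZMod p) : |Efun u - (1 + χ u)| = (if u = 0 then 1 else 0) := by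
  unfold Efun
  split_ifs <;> simp

lemma ptwise (u v w : ZMod p) :
    |Efun u * Efun v * Efun w - (1 + χ u) * (1 + χ v) * (1 + χ w)|
      ≤ 4 * ((if u = 0 then (1:ℤ) else 0) + (if v = 0 then 1 else 0) + (if w = 0 then 1 else 0)) := by
  set fu := (1 : ℤ) + χ u
  set fv := (1 : ℤ) + χ v
  set fw := (1 : ℤ) + χ w
  have key : Efun u * Efun v * Efun w - fu * fv * fw
      = (Efun u - fu) * (Efun v * Efun w) + fu * ((Efun v - fv) * Efun w)
        + fu * fv * (Efun w - fw) := by ring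
  rw [key]
  have h1 : |(Efun u - fu) * (Efun v * Efun w)| ≤ (if u = 0 then (1:ℤ) else 0) * 4 := by
    rw [abs_mul, Efun_sub_f, abs_mul]
    apply mul_le_mul_of_nonneg_left ?_ (by positivity)
    calc |Efun v| * |Efun w| ≤ 2 * 2 :=
      mul_le_mul (Efun_abs v) (Efun_abs w) (abs_nonneg _) (by norm_num)
    _ = 4 := by norm_num
  have h2 : |fu * ((Efun v - fv) * Efun w)| ≤ (if v = 0 then (1:ℤ) else 0) * 4 := by
    rw [abs_mul, abs_mul, Efun_sub_f]
    calc |fu| * ((if v = 0 then (1:ℤ) else 0) * |Efun w|)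
        ≤ 2 * ((if v = 0 then (1:ℤ) else 0) * 2) := by
          apply mul_le_mul (f_abs u) ?_ (by positivity) (by norm_num)
          exact mul_le_mul le_rfl (Efun_abs w) (abs_nonneg _) (by positivity)
      _ ≤ (if v = 0 then (1:ℤ) else 0) * 4 := by split_ifs <;> norm_num
  have h3 : |fu * fv * (Efun w - fw)| ≤ (if w = 0 then (1:ℤ) else 0) * 4 := by
    rw [abs_mul, abs_mul, Efun_sub_f]
    calc |fu| * |fv| * (if w = 0 then (1:ℤ) else 0)
        ≤ 2 * 2 * (if w = 0 then (1:ℤ) else 0) := by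
          apply mul_le_mul ?_ le_rfl (by positivity) (by norm_num)
          exact mul_le_mul (f_abs u) (f_abs v) (abs_nonneg _) (by norm_num)
      _ = (if w = 0 then (1:ℤ) else 0) * 4 := by ring
  calc |(Efun u - fu) * (Efun v * Efun w) + fu * ((Efun v - fv) * Efun w)
        + fu * fv * (Efun w - fw)|
      ≤ |(Efun u - fu) * (Efun v * Efun w) + fu * ((Efun v - fv) * Efun w)|
        + |fu * fv * (Efun w - fw)| := abs_add_le _ _
    _ ≤ |(Efun u - fu) * (Efun v * Efun w)| + |fu * ((Efun v - fv) * Efun w)|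
        + |fu * fv * (Efun w - fw)| := by gcongr; exact abs_add_le _ _
    _ ≤ (if u = 0 then (1:ℤ) else 0) * 4 + (if v = 0 then (1:ℤ) else 0) * 4
        + (if w = 0 then (1:ℤ) else 0) * 4 := by gcongr
    _ = 4 * ((if u = 0 then (1:ℤ) else 0) + (if v = 0 then 1 else 0)
        + (if w = 0 then 1 else 0)) := by ring


lemma sum_const_p (x : ℤ) : ∑ _c : ZMod p, x = (p:ℤ) * x := by
  simp [Finset.sum_const, ZMod.card, mul_comm]

lemma innerchi (hp2 : p ≠ 2) (b : ZMod p) :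
    ∑ x : ZMod p, χ (b * x + r) = if b = 0 then (p:ℤ) * χ r else 0 := by
  by_cases hb : b = 0
  · simp only [hb, if_true, zero_mul, zero_add]
    exact sum_const_p _
  · simp only [hb, if_false]
    exact chi_sum_affine hp2 hb r

lemma innerchi' (hp2 : p ≠ 2) (b : ZMod p) :
    ∑ x : ZMod p, χ (x * b + r) = if b = 0 then (p:ℤ) * χ r else 0 := by
  rw [← innerchi hp2 b]
  exact Finset.sum_congr rfl (fun x _ => by rw [mul_comm])

lemma vOne : ∑ _a : ZMod p, ∑ _b : ZMod p, ∑ _c : ZMod p, (1:ℤ) = (p:ℤ)^3 := by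
  simp only [sum_const_p]; ring

lemma vA1 (hp2 : p ≠ 2) : ∑ a : ZMod p, ∑ b : ZMod p, ∑ _c : ZMod p, χ (a * b + r)
    = (p:ℤ)^2 * χ r := by
  simp only [sum_const_p, ← Finset.mul_sum]
  simp only [innerchi hp2]
  rw [Finset.sum_ite_eq' Finset.univ (0 : ZMod p) (fun _ => (p:ℤ) * χ r)]
  simp; ring

lemma vA2 (hp2 : p ≠ 2) : ∑ _a : ZMod p, ∑ b : ZMod p, ∑ c : ZMod p, χ (b * c + r)
    = (p:ℤ)^2 * χ r := by
  have h : ∑ b : ZMod p, ∑ c : ZMod p, χ (b * c + r) = (p:ℤ) * χ r := by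
    simp only [innerchi hp2]
    rw [Finset.sum_ite_eq' Finset.univ (0 : ZMod p) (fun _ => (p:ℤ) * χ r)]
    simp
  rw [Finset.sum_congr rfl (fun a _ => h), sum_const_p]; ring

lemma vA3 (hp2 : p ≠ 2) : ∑ a : ZMod p, ∑ _b : ZMod p, ∑ c : ZMod p, χ (c * a + r)
    = (p:ℤ)^2 * χ r := by
  simp only [innerchi' hp2, sum_const_p]
  simp only [mul_ite, mul_zero]
  rw [Finset.sum_ite_eq' Finset.univ (0 : ZMod p) (fun _ => (p:ℤ) * ((p:ℤ) * χ r))]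
  simp; ring

lemma vB12 (hp2 : p ≠ 2) : ∑ a : ZMod p, ∑ b : ZMod p, ∑ c : ZMod p, χ (a * b + r) * χ (b * c + r)
    = (p:ℤ)^2 * (χ r)^2 := by
  have h : ∀ a b : ZMod p, ∑ c : ZMod p, χ (a * b + r) * χ (b * c + r)
      = if b = 0 then χ (a * b + r) * ((p:ℤ) * χ r) else 0 := by
    intro a b
    rw [← Finset.mul_sum, innerchi hp2]
    split_ifs <;> simp
  simp only [h]
  have h2 : ∀ a : ZMod p, ∑ b : ZMod p, (if b = 0 then χ (a * b + r) * ((p:ℤ) * χ r) else 0)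
      = χ r * ((p:ℤ) * χ r) := by
    intro a
    rw [Finset.sum_ite_eq' Finset.univ (0 : ZMod p)
      (fun b => χ (a * b + r) * ((p:ℤ) * χ r))]
    simp
  simp only [h2, sum_const_p]; ring

lemma vB23 (hp2 : p ≠ 2) : ∑ a : ZMod p, ∑ b : ZMod p, ∑ c : ZMod p, χ (b * c + r) * χ (c * a + r)
    = (p:ℤ)^2 * (χ r)^2 := by
  have h : ∀ a : ZMod p, ∑ b : ZMod p, ∑ c : ZMod p, χ (b * c + r) * χ (c * a + r)
      = (p:ℤ) * χ r * χ r := by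
    intro a
    rw [Finset.sum_comm]
    have h1 : ∀ c : ZMod p, ∑ b : ZMod p, χ (b * c + r) * χ (c * a + r)
        = if c = 0 then ((p:ℤ) * χ r) * χ (c * a + r) else 0 := by
      intro c
      rw [← Finset.sum_mul, innerchi' hp2]
      split_ifs <;> simp
    simp only [h1]
    rw [Finset.sum_ite_eq' Finset.univ (0 : ZMod p)
      (fun c => ((p:ℤ) * χ r) * χ (c * a + r))]
    simp
  simp only [h, sum_const_p]; ring

lemma vB13 (hp2 : p ≠ 2) : ∑ a : ZMod p, ∑ b : ZMod p, ∑ c : ZMod p, χ (a * b + r) * χ (c * a + r)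
    = (p:ℤ)^2 * (χ r)^2 := by
  have h : ∀ a : ZMod p, ∑ b : ZMod p, ∑ c : ZMod p, χ (a * b + r) * χ (c * a + r)
      = (if a = 0 then (p:ℤ) * χ r else 0) * (if a = 0 then (p:ℤ) * χ r else 0) := by
    intro a
    rw [← Finset.sum_mul_sum, innerchi hp2, innerchi' hp2]
  simp only [h]
  have h2 : ∀ a : ZMod p,
      (if a = 0 then (p:ℤ) * χ r else 0) * (if a = 0 then (p:ℤ) * χ r else 0)
      = if a = 0 then ((p:ℤ) * χ r) * ((p:ℤ) * χ r) else 0 := by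
    intro a; split_ifs <;> simp
  simp only [h2]
  rw [Finset.sum_ite_eq' Finset.univ (0 : ZMod p)
    (fun _ => ((p:ℤ) * χ r) * ((p:ℤ) * χ r))]
  simp; ring


-- delta triple sums
lemma dS1 (hr : r ≠ 0) :
    ∑ a : ZMod p, ∑ b : ZMod p, ∑ _c : ZMod p, (if a * b + r = 0 then (1:ℤ) else 0)
      ≤ (p:ℤ)^2 := by
  simp only [sum_const_p, ← Finset.mul_sum]
  calc (p:ℤ) * ∑ a : ZMod p, ∑ b : ZMod p, (if a * b + r = 0 then (1:ℤ) else 0)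
      ≤ (p:ℤ) * ∑ _a : ZMod p, (1:ℤ) := by
        apply mul_le_mul_of_nonneg_left ?_ (by positivity)
        exact Finset.sum_le_sum (fun a _ => delta_sum_le hr a)
    _ = (p:ℤ)^2 := by rw [sum_const_p]; ring

lemma dS2 (hr : r ≠ 0) :
    ∑ _a : ZMod p, ∑ b : ZMod p, ∑ c : ZMod p, (if b * c + r = 0 then (1:ℤ) else 0)
      ≤ (p:ℤ)^2 := by
  have h : ∑ b : ZMod p, ∑ c : ZMod p, (if b * c + r = 0 then (1:ℤ) else 0) ≤ (p:ℤ) := by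
    calc ∑ b : ZMod p, ∑ c : ZMod p, (if b * c + r = 0 then (1:ℤ) else 0)
        ≤ ∑ _b : ZMod p, (1:ℤ) := Finset.sum_le_sum (fun b _ => delta_sum_le hr b)
      _ = (p:ℤ) := by rw [sum_const_p]; ring
  calc ∑ _a : ZMod p, ∑ b : ZMod p, ∑ c : ZMod p, (if b * c + r = 0 then (1:ℤ) else 0)
      ≤ ∑ _a : ZMod p, (p:ℤ) := Finset.sum_le_sum (fun a _ => h)
    _ = (p:ℤ)^2 := by rw [sum_const_p]; ring

lemma delta_sum_le'' (hr : r ≠ 0) (a : ZMod p) :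
    ∑ c : ZMod p, (if c * a + r = 0 then (1:ℤ) else 0) ≤ 1 := by
  have : ∀ c : ZMod p, (if c * a + r = 0 then (1:ℤ) else 0)
      = (if a * c + r = 0 then (1:ℤ) else 0) := by
    intro c; rw [mul_comm]
  simp only [this]
  exact delta_sum_le hr a

lemma dS3 (hr : r ≠ 0) :
    ∑ a : ZMod p, ∑ _b : ZMod p, ∑ c : ZMod p, (if c * a + r = 0 then (1:ℤ) else 0)
      ≤ (p:ℤ)^2 := by
  have h : ∀ a : ZMod p, ∑ _b : ZMod p, ∑ c : ZMod p, (if c * a + r = 0 then (1:ℤ) else 0)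
      ≤ (p:ℤ) := by
    intro a
    calc ∑ _b : ZMod p, ∑ c : ZMod p, (if c * a + r = 0 then (1:ℤ) else 0)
        ≤ ∑ _b : ZMod p, (1:ℤ) := Finset.sum_le_sum (fun b _ => delta_sum_le'' hr a)
      _ = (p:ℤ) := by rw [sum_const_p]; ring
  calc ∑ a : ZMod p, ∑ _b : ZMod p, ∑ c : ZMod p, (if c * a + r = 0 then (1:ℤ) else 0)
      ≤ ∑ _a : ZMod p, (p:ℤ) := Finset.sum_le_sum (fun a _ => h a)
    _ = (p:ℤ)^2 := by rw [sum_const_p]; ring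

-- triple character sum bound
lemma vT (hp2 : p ≠ 2) (hr : r ≠ 0) :
    |∑ a : ZMod p, ∑ b : ZMod p, ∑ c : ZMod p,
      χ (a * b + r) * χ (b * c + r) * χ (c * a + r)| ≤ 4 * (p:ℤ)^2 := by
  have hI : ∀ a b : ZMod p,
      |∑ c : ZMod p, χ (b * c + r) * χ (a * c + r)|
        ≤ if a = 0 ∨ b = 0 ∨ a - b = 0 then (p:ℤ) else 1 := by
    intro a b
    split_ifs with h
    · exact pair_sum_trivial _ _ (fun x => chi_abs _) (fun x => chi_abs _)
    · push_neg at h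
      obtain ⟨ha, hb, hab⟩ := h
      have hab : a ≠ b := fun he => hab (by rw [he, sub_self])
      apply pair_sum_le hp2 r r hb ha
      intro hd
      apply hab
      have : (b - a) * r = 0 := by linear_combination hd
      rcases mul_eq_zero.mp this with h' | h'
      · linear_combination -h'
      · exact absurd h' hr
  have hinner : ∀ a b : ZMod p,
      |∑ c : ZMod p, χ (a * b + r) * χ (b * c + r) * χ (c * a + r)|
        ≤ if a = 0 ∨ b = 0 ∨ a - b = 0 then (p:ℤ) else 1 := by
    intro a b
    have e1 : ∑ c : ZMod p, χ (a * b + r) * χ (b * c + r) * χ (c * a + r)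
        = χ (a * b + r) * ∑ c : ZMod p, χ (b * c + r) * χ (a * c + r) := by
      rw [Finset.mul_sum]
      apply Finset.sum_congr rfl
      intro c _
      rw [mul_comm c a]; ring
    rw [e1, abs_mul]
    calc |χ (a * b + r)| * |∑ c : ZMod p, χ (b * c + r) * χ (a * c + r)|
        ≤ 1 * (if a = 0 ∨ b = 0 ∨ a - b = 0 then (p:ℤ) else 1) := by
          apply mul_le_mul (chi_abs _) (hI a b) (abs_nonneg _) (by norm_num)
      _ = _ := by rw [one_mul]
  have hbound : ∀ a b : ZMod p, (if a = 0 ∨ b = 0 ∨ a - b = 0 then (p:ℤ) else 1)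
      ≤ 1 + (p:ℤ) * ((if a = 0 then (1:ℤ) else 0) + (if b = 0 then (1:ℤ) else 0)
        + (if a - b = 0 then (1:ℤ) else 0)) := by
    intro a b
    have hp1 : (1:ℤ) ≤ (p:ℤ) := by
      exact_mod_cast Nat.one_le_iff_ne_zero.mpr (Fact.out (p := p.Prime)).pos.ne'
    by_cases ha : a = 0 <;> by_cases hb : b = 0 <;> by_cases hab : a - b = 0 <;>
      simp [ha, hb, hab] <;> linarith
  have d0 : ∑ _a : ZMod p, ∑ _b : ZMod p, (1:ℤ) = (p:ℤ)^2 := by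
    simp only [sum_const_p]; ring
  have d1 : ∑ a : ZMod p, ∑ _b : ZMod p, (if a = 0 then (1:ℤ) else 0) = (p:ℤ) := by
    simp only [sum_const_p, mul_ite, mul_zero, mul_one]
    rw [Finset.sum_ite_eq' Finset.univ (0 : ZMod p) (fun _ => (p:ℤ))]
    simp
  have d2 : ∑ _a : ZMod p, ∑ b : ZMod p, (if b = 0 then (1:ℤ) else 0) = (p:ℤ) := by
    have : ∑ b : ZMod p, (if b = 0 then (1:ℤ) else 0) = 1 := by
      rw [Finset.sum_ite_eq' Finset.univ (0 : ZMod p) (fun _ => (1:ℤ))]; simp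
    simp only [this]
    rw [sum_const_p]; ring
  have d3 : ∑ a : ZMod p, ∑ b : ZMod p, (if a - b = 0 then (1:ℤ) else 0) = (p:ℤ) := by
    have h : ∀ a : ZMod p, ∑ b : ZMod p, (if a - b = 0 then (1:ℤ) else 0) = 1 := by
      intro a
      have he : ∀ b : ZMod p, (if a - b = 0 then (1:ℤ) else 0) = (if b = a then (1:ℤ) else 0) := by
        intro b
        by_cases hb : b = a
        · simp [hb]
        · have : a - b ≠ 0 := fun hc => hb (by linear_combination -hc)
          simp [hb, this]
      simp only [he]
      rw [Finset.sum_ite_eq' Finset.univ a (fun _ => (1:ℤ))]; simp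
    simp only [h]
    rw [sum_const_p]; ring
  have hptb : ∀ a b : ZMod p,
      (1:ℤ) + (p:ℤ) * ((if a = 0 then (1:ℤ) else 0) + (if b = 0 then (1:ℤ) else 0)
        + (if a - b = 0 then (1:ℤ) else 0))
      = 1 + (p:ℤ) * (if a = 0 then (1:ℤ) else 0) + (p:ℤ) * (if b = 0 then (1:ℤ) else 0)
        + (p:ℤ) * (if a - b = 0 then (1:ℤ) else 0) := fun a b => by ring
  calc |∑ a : ZMod p, ∑ b : ZMod p, ∑ c : ZMod p,
        χ (a * b + r) * χ (b * c + r) * χ (c * a + r)|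
      ≤ ∑ a : ZMod p, |∑ b : ZMod p, ∑ c : ZMod p,
        χ (a * b + r) * χ (b * c + r) * χ (c * a + r)| := Finset.abs_sum_le_sum_abs _ _
    _ ≤ ∑ a : ZMod p, ∑ b : ZMod p, |∑ c : ZMod p,
        χ (a * b + r) * χ (b * c + r) * χ (c * a + r)| :=
        Finset.sum_le_sum (fun a _ => Finset.abs_sum_le_sum_abs _ _)
    _ ≤ ∑ a : ZMod p, ∑ b : ZMod p, ((1:ℤ) + (p:ℤ) * ((if a = 0 then (1:ℤ) else 0)
        + (if b = 0 then (1:ℤ) else 0) + (if a - b = 0 then (1:ℤ) else 0))) := by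
        apply Finset.sum_le_sum
        intro a _
        apply Finset.sum_le_sum
        intro b _
        exact le_trans (hinner a b) (hbound a b)
    _ = 4 * (p:ℤ)^2 := by
        simp only [hptb, Finset.sum_add_distrib, ← Finset.mul_sum]
        rw [d0, d1, d2, d3]
        ring


theorem count_bound (hp2 : p ≠ 2) (hr : r ≠ 0) :
    |(∑ a : ZMod p, ∑ b : ZMod p, ∑ c : ZMod p,
      Efun (a * b + r) * Efun (b * c + r) * Efun (c * a + r)) - (p:ℤ)^3|
      ≤ 22 * (p:ℤ)^2 := by
  have ptexp : ∀ u v w : ZMod p, ((1:ℤ) + χ u) * (1 + χ v) * (1 + χ w)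
      = 1 + χ u + χ v + χ w + χ u * χ v + χ v * χ w + χ u * χ w
        + χ u * χ v * χ w := fun u v w => by ring
  set Sf := ∑ a : ZMod p, ∑ b : ZMod p, ∑ c : ZMod p,
      ((1:ℤ) + χ (a * b + r)) * (1 + χ (b * c + r)) * (1 + χ (c * a + r)) with hSf
  set SE := ∑ a : ZMod p, ∑ b : ZMod p, ∑ c : ZMod p,
      Efun (a * b + r) * Efun (b * c + r) * Efun (c * a + r) with hSE
  set T := ∑ a : ZMod p, ∑ b : ZMod p, ∑ c : ZMod p,
      χ (a * b + r) * χ (b * c + r) * χ (c * a + r) with hT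
  have hsplit : Sf = (p:ℤ)^3 + (p:ℤ)^2 * χ r + (p:ℤ)^2 * χ r + (p:ℤ)^2 * χ r
      + (p:ℤ)^2 * (χ r)^2 + (p:ℤ)^2 * (χ r)^2 + (p:ℤ)^2 * (χ r)^2 + T := by
    rw [hSf]
    simp only [ptexp]
    simp only [Finset.sum_add_distrib]
    rw [vOne, vA1 hp2, vA2 hp2, vA3 hp2, vB12 hp2, vB23 hp2, vB13 hp2, hT]
  have h2 : |Sf - (p:ℤ)^3| ≤ 10 * (p:ℤ)^2 := by
    rw [hsplit]
    obtain ⟨hx1, hx2⟩ := abs_le.mp (chi_abs r)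
    obtain ⟨hT1, hT2⟩ := abs_le.mp (vT hp2 hr)
    have hp2nn : (0:ℤ) ≤ (p:ℤ)^2 := by positivity
    have hxsq : (χ r)^2 ≤ 1 := by nlinarith
    have b1 : (p:ℤ)^2 * χ r ≤ (p:ℤ)^2 := by nlinarith
    have b2 : -(p:ℤ)^2 ≤ (p:ℤ)^2 * χ r := by nlinarith
    have b3 : (p:ℤ)^2 * (χ r)^2 ≤ (p:ℤ)^2 := by nlinarith
    have b4 : (0:ℤ) ≤ (p:ℤ)^2 * (χ r)^2 := by positivity
    rw [abs_le]
    constructor <;> linarith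
  have h1 : |SE - Sf| ≤ 12 * (p:ℤ)^2 := by
    have hdiff : SE - Sf = ∑ a : ZMod p, ∑ b : ZMod p, ∑ c : ZMod p,
        (Efun (a * b + r) * Efun (b * c + r) * Efun (c * a + r)
          - ((1:ℤ) + χ (a * b + r)) * (1 + χ (b * c + r)) * (1 + χ (c * a + r))) := by
      rw [hSE, hSf]
      simp only [← Finset.sum_sub_distrib]
    have hptb : ∀ a b c : ZMod p,
        (4:ℤ) * ((if a * b + r = 0 then (1:ℤ) else 0) + (if b * c + r = 0 then 1 else 0)
          + (if c * a + r = 0 then 1 else 0))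
        = 4 * (if a * b + r = 0 then (1:ℤ) else 0) + 4 * (if b * c + r = 0 then (1:ℤ) else 0)
          + 4 * (if c * a + r = 0 then (1:ℤ) else 0) := fun a b c => by ring
    rw [hdiff]
    calc |∑ a : ZMod p, ∑ b : ZMod p, ∑ c : ZMod p,
          (Efun (a * b + r) * Efun (b * c + r) * Efun (c * a + r)
            - ((1:ℤ) + χ (a * b + r)) * (1 + χ (b * c + r)) * (1 + χ (c * a + r)))|
        ≤ ∑ a : ZMod p, ∑ b : ZMod p, ∑ c : ZMod p,
          |Efun (a * b + r) * Efun (b * c + r) * Efun (c * a + r)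
            - ((1:ℤ) + χ (a * b + r)) * (1 + χ (b * c + r)) * (1 + χ (c * a + r))| := by
          refine le_trans (Finset.abs_sum_le_sum_abs _ _) (Finset.sum_le_sum fun a _ => ?_)
          exact le_trans (Finset.abs_sum_le_sum_abs _ _)
            (Finset.sum_le_sum fun b _ => Finset.abs_sum_le_sum_abs _ _)
      _ ≤ ∑ a : ZMod p, ∑ b : ZMod p, ∑ c : ZMod p,
          ((4:ℤ) * ((if a * b + r = 0 then (1:ℤ) else 0) + (if b * c + r = 0 then 1 else 0)
            + (if c * a + r = 0 then 1 else 0))) := by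
          refine Finset.sum_le_sum fun a _ => Finset.sum_le_sum fun b _ =>
            Finset.sum_le_sum fun c _ => ptwise _ _ _
      _ ≤ 12 * (p:ℤ)^2 := by
          simp only [hptb, Finset.sum_add_distrib, ← Finset.mul_sum]
          have := dS1 (p := p) (r := r) hr
          have := dS2 (p := p) (r := r) hr
          have := dS3 (p := p) (r := r) hr
          linarith
  calc |SE - (p:ℤ)^3| ≤ |SE - Sf| + |Sf - (p:ℤ)^3| := by
        have : SE - (p:ℤ)^3 = (SE - Sf) + (Sf - (p:ℤ)^3) := by ring
        rw [this]; exact abs_add_le _ _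
    _ ≤ 12 * (p:ℤ)^2 + 10 * (p:ℤ)^2 := add_le_add h1 h2
    _ = 22 * (p:ℤ)^2 := by ring


def Pcond (r : ZMod p) (t : ZMod p × ZMod p × ZMod p) : Prop :=
  (t.1 * t.2.1 + r ≠ 0 ∧ IsSquare (t.1 * t.2.1 + r)) ∧
  (t.2.1 * t.2.2 + r ≠ 0 ∧ IsSquare (t.2.1 * t.2.2 + r)) ∧
  (t.2.2 * t.1 + r ≠ 0 ∧ IsSquare (t.2.2 * t.1 + r))

noncomputable def Tfin (r : ZMod p) : Finset (ZMod p × ZMod p × ZMod p) :=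
  @Finset.filter _ (Pcond r) (Classical.decPred _) Finset.univ

theorem card_main (hp2 : p ≠ 2) (hr : r ≠ 0) :
    |8 * ((Tfin r).card : ℤ) - (p:ℤ)^3| ≤ 22 * (p:ℤ)^2 := by
  classical
  have hpt : ∀ t : ZMod p × ZMod p × ZMod p,
      Efun (t.1 * t.2.1 + r) * Efun (t.2.1 * t.2.2 + r) * Efun (t.2.2 * t.1 + r)
        = if Pcond r t then (8:ℤ) else 0 := by
    intro t
    rw [Efun_eq, Efun_eq, Efun_eq]
    unfold Pcond
    split_ifs <;> simp_all
  have hcard : 8 * ((Tfin r).card : ℤ)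
      = ∑ t : ZMod p × ZMod p × ZMod p, if Pcond r t then (8:ℤ) else 0 := by
    rw [Tfin]
    rw [← Finset.sum_filter (s := Finset.univ) (f := fun _ => (8:ℤ))]
    rw [Finset.sum_const]
    push_cast
    ring
  have hsum : ∑ t : ZMod p × ZMod p × ZMod p, (if Pcond r t then (8:ℤ) else 0)
      = ∑ a : ZMod p, ∑ b : ZMod p, ∑ c : ZMod p,
        Efun (a * b + r) * Efun (b * c + r) * Efun (c * a + r) := by
    simp only [← hpt]
    rw [Fintype.sum_prod_type]
    apply Finset.sum_congr rfl
    intro a _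
    rw [Fintype.sum_prod_type]
  rw [hcard, hsum]
  exact count_bound hp2 hr


end Count


section Hensel
variable {p : ℕ} [Fact p.Prime]

lemma toZMod_eq_zero_iff (x : ℤ_[p]) : PadicInt.toZMod x = 0 ↔ ‖x‖ < 1 := by
  rw [← RingHom.mem_ker, PadicInt.ker_toZMod, IsLocalRing.mem_maximalIdeal, mem_nonunits_iff,
    PadicInt.isUnit_iff]
  constructor
  · intro h
    exact lt_of_le_of_ne (PadicInt.norm_le_one x) h
  · intro h
    exact ne_of_lt h

lemma norm_eq_one_of_toZMod_ne (x : ℤ_[p]) (hx : PadicInt.toZMod x ≠ 0) : ‖x‖ = 1 := by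
  have h1 := PadicInt.norm_le_one x
  have h2 : ¬ ‖x‖ < 1 := fun h => hx ((toZMod_eq_zero_iff x).mpr h)
  linarith

lemma norm_two_eq_one (hp2 : p ≠ 2) : ‖(2 : ℤ_[p])‖ = 1 := by
  apply norm_eq_one_of_toZMod_ne
  have : (PadicInt.toZMod (2 : ℤ_[p]) : ZMod p) = (2 : ZMod p) := by
    rw [map_ofNat]
  rw [this]
  intro h
  have hd : p ∣ 2 := (ZMod.natCast_eq_zero_iff 2 p).mp (by exact_mod_cast h)
  have hp := (Fact.out : p.Prime)
  rcases (Nat.le_of_dvd (by norm_num) hd).lt_or_eq with h2 | h2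
  · interval_cases p
    · exact absurd hp (by norm_num)
    · exact absurd hp (by norm_num)
  · exact hp2 h2

lemma isSquare_of_toZMod (hp2 : p ≠ 2) (z : ℤ_[p]) (hz : PadicInt.toZMod z ≠ 0)
    (hsq : IsSquare (PadicInt.toZMod z)) : IsSquare z := by
  obtain ⟨s, hs⟩ := hsq
  have hs0 : s ≠ 0 := by
    intro h; rw [h, mul_zero] at hs; exact hz hs
  set a : ℤ_[p] := (s.val : ℤ_[p]) with ha
  have hta : PadicInt.toZMod a = s := by
    rw [ha, map_natCast, ZMod.natCast_val, ZMod.cast_id]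
  have hna : ‖a‖ = 1 := norm_eq_one_of_toZMod_ne a (by rw [hta]; exact hs0)
  set F : Polynomial ℤ_[p] := Polynomial.X ^ 2 - Polynomial.C z with hF
  have hFa : F.eval a = a ^ 2 - z := by simp [hF]
  have hF' : F.derivative.eval a = 2 * a := by
    simp [hF, Polynomial.derivative_pow]
  have hnorm : ‖F.eval a‖ < ‖F.derivative.eval a‖ ^ 2 := by
    rw [hFa, hF']
    have h2a : ‖(2:ℤ_[p]) * a‖ = 1 := by
      rw [norm_mul, norm_two_eq_one hp2, hna, mul_one]
    rw [h2a, one_pow, ← toZMod_eq_zero_iff, map_sub, map_pow, hta, hs]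
    ring
  obtain ⟨w, hw, -⟩ := hensels_lemma hnorm
  refine ⟨w, ?_⟩
  have hFw : Polynomial.eval w F = w ^ 2 - z := by simp [hF]
  rw [Polynomial.coe_aeval_eq_eval, hFw] at hw
  have : z = w ^ 2 := by linear_combination -hw
  rw [this]; ring

end Hensel


section Meas
variable {p : ℕ} [Fact p.Prime]

instance : IsProbabilityMeasure (μZp p) :=
  ⟨by rw [μZp]; simpa using Measure.addHaarMeasure_self (K₀ := (⊤ : TopologicalSpace.PositiveCompacts ℤ_[p]))⟩

instance : (μZp p).IsAddLeftInvariant := by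
  rw [μZp]; infer_instance

def Vset (a : ZMod p) : Set ℤ_[p] := PadicInt.toZMod ⁻¹' {a}

lemma toZMod_val_cast (a : ZMod p) : PadicInt.toZMod ((a.val : ℤ_[p])) = a := by
  rw [map_natCast, ZMod.natCast_val, ZMod.cast_id]

lemma Vset_open (a : ZMod p) : IsOpen (Vset a) := by
  have he : Vset a = {x : ℤ_[p] | ‖x - (a.val : ℤ_[p])‖ < 1} := by
    ext x
    simp only [Vset, Set.mem_preimage, Set.mem_singleton_iff, Set.mem_setOf_eq]
    rw [← toZMod_eq_zero_iff, map_sub, toZMod_val_cast, sub_eq_zero]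
  rw [he]
  have : Continuous (fun x : ℤ_[p] => ‖x - (a.val : ℤ_[p])‖) :=
    (continuous_id.sub continuous_const).norm
  exact isOpen_lt this continuous_const

lemma Vset_meas (a : ZMod p) : MeasurableSet (Vset a) := (Vset_open a).measurableSet

lemma Vset_measure (a : ZMod p) : μZp p (Vset a) = (p : ENNReal)⁻¹ := by
  have htrans : ∀ a : ZMod p, Vset a = (fun x => (-(a.val : ℤ_[p])) + x) ⁻¹' (Vset 0) := by
    intro a
    ext x
    simp only [Vset, Set.mem_preimage, Set.mem_singleton_iff]
    rw [map_add, map_neg, toZMod_val_cast, neg_add_eq_zero, eq_comm]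
  have hmeq : ∀ a : ZMod p, μZp p (Vset a) = μZp p (Vset 0) := by
    intro a
    rw [htrans a]
    exact measure_preimage_add (μZp p) _ _
  have hdisj : Pairwise (Function.onFun Disjoint (fun a : ZMod p => Vset a)) := by
    intro a b hab
    simp only [Function.onFun, Set.disjoint_left]
    intro x hxa hxb
    exact hab (by rw [← hxa, ← hxb] : a = b)
  have hU : ⋃ a : ZMod p, Vset a = Set.univ := by
    ext x
    simp only [Set.mem_iUnion, Set.mem_univ, iff_true]
    exact ⟨PadicInt.toZMod x, rfl⟩
  have h1 : (1 : ENNReal) = ∑' a : ZMod p, μZp p (Vset a) := by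
    rw [← measure_iUnion hdisj (fun a => Vset_meas a), hU, measure_univ]
  rw [tsum_fintype] at h1
  have h2 : (1 : ENNReal) = (p : ENNReal) * μZp p (Vset 0) := by
    rw [h1]
    rw [Finset.sum_congr rfl (fun a _ => hmeq a), Finset.sum_const, Finset.card_univ, ZMod.card,
      nsmul_eq_mul]
  have hp0 : (p : ENNReal) ≠ 0 := by
    exact_mod_cast (Fact.out : p.Prime).pos.ne'
  have hptop : (p : ENNReal) ≠ ⊤ := ENNReal.natCast_ne_top p
  rw [hmeq a]
  rw [← one_mul (μZp p (Vset 0)), ← ENNReal.inv_mul_cancel hp0 hptop, mul_assoc, ← h2, mul_one]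


noncomputable def Phi (p : ℕ) [Fact p.Prime] (x : ℤ_[p] × ℤ_[p] × ℤ_[p]) : ZMod p × ZMod p × ZMod p :=
  (PadicInt.toZMod x.1, PadicInt.toZMod x.2.1, PadicInt.toZMod x.2.2)

noncomputable def mu3 (p : ℕ) [Fact p.Prime] : Measure (ℤ_[p] × ℤ_[p] × ℤ_[p]) :=
  (μZp p).prod ((μZp p).prod (μZp p))

lemma Phi_fiber (t : ZMod p × ZMod p × ZMod p) :
    Phi p ⁻¹' {t} = Vset t.1 ×ˢ (Vset t.2.1 ×ˢ Vset t.2.2) := by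
  ext x
  simp only [Phi, Set.mem_preimage, Set.mem_singleton_iff, Set.mem_prod, Vset, Prod.ext_iff]

lemma fiber_meas (t : ZMod p × ZMod p × ZMod p) : MeasurableSet (Phi p ⁻¹' {t}) := by
  rw [Phi_fiber]
  exact (Vset_meas t.1).prod ((Vset_meas t.2.1).prod (Vset_meas t.2.2))

lemma mu3_fiber (t : ZMod p × ZMod p × ZMod p) :
    mu3 p (Phi p ⁻¹' {t}) = ((p : ENNReal)⁻¹) ^ 3 := by
  rw [Phi_fiber, mu3, Measure.prod_prod, Measure.prod_prod, Vset_measure, Vset_measure,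
    Vset_measure]
  ring

lemma mu3_preimage (T : Finset (ZMod p × ZMod p × ZMod p)) :
    mu3 p (Phi p ⁻¹' ↑T) = (T.card : ENNReal) * ((p : ENNReal)⁻¹) ^ 3 := by
  have hU : Phi p ⁻¹' ↑T = ⋃ t ∈ T, Phi p ⁻¹' {t} := by
    ext x
    simp only [Set.mem_preimage, Finset.mem_coe, Set.mem_iUnion, Set.mem_singleton_iff]
    constructor
    · intro h; exact ⟨Phi p x, h, rfl⟩
    · rintro ⟨t, ht, he⟩; rwa [he]
  rw [hU, measure_biUnion_finset ?_ (fun t _ => fiber_meas t)]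
  · rw [Finset.sum_congr rfl (fun t _ => mu3_fiber t), Finset.sum_const, nsmul_eq_mul]
  · intro a _ b _ hab
    simp only [Function.onFun, Set.disjoint_left]
    intro x hxa hxb
    simp only [Set.mem_preimage, Set.mem_singleton_iff] at hxa hxb
    exact hab (by rw [← hxa, hxb])

instance : IsProbabilityMeasure (mu3 p) := by
  rw [mu3]; infer_instance

end Meas

theorem stmt19 (r : ℤ) :
    ∃ C : ℝ, ∀ (p : ℕ) (hp : p.Prime), p ≠ 2 → ¬ ((p:ℤ) ∣ r) →
      haveI : Fact p.Prime := ⟨hp⟩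
      |(((μZp p).prod ((μZp p).prod (μZp p)))
          {x : ℤ_[p] × ℤ_[p] × ℤ_[p] |
            IsSquare (x.1 * x.2.1 + (r : ℤ_[p])) ∧
            IsSquare (x.2.1 * x.2.2 + (r : ℤ_[p])) ∧
            IsSquare (x.1 * x.2.2 + (r : ℤ_[p]))}).toReal - 1/8| ≤ C / p := by
  refine ⟨6, fun p hp hp2 hpr => ?_⟩
  haveI : Fact p.Prime := ⟨hp⟩
  classical
  set rp : ZMod p := ((r : ℤ) : ZMod p) with hrp
  have hr : rp ≠ 0 := by
    rw [hrp, Ne, ZMod.intCast_zmod_eq_zero_iff_dvd]; exact hpr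
  set S : Set (ℤ_[p] × ℤ_[p] × ℤ_[p]) :=
    {x : ℤ_[p] × ℤ_[p] × ℤ_[p] |
      IsSquare (x.1 * x.2.1 + (r : ℤ_[p])) ∧
      IsSquare (x.2.1 * x.2.2 + (r : ℤ_[p])) ∧
      IsSquare (x.1 * x.2.2 + (r : ℤ_[p]))} with hS
  show |(mu3 p S).toReal - 1/8| ≤ 6 / p
  -- map identities
  have hmap1 : ∀ x : ℤ_[p] × ℤ_[p] × ℤ_[p],
      PadicInt.toZMod (x.1 * x.2.1 + (r : ℤ_[p])) = (Phi p x).1 * (Phi p x).2.1 + rp := by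
    intro x; simp only [Phi]; rw [map_add, map_mul, map_intCast]
  have hmap2 : ∀ x : ℤ_[p] × ℤ_[p] × ℤ_[p],
      PadicInt.toZMod (x.2.1 * x.2.2 + (r : ℤ_[p])) = (Phi p x).2.1 * (Phi p x).2.2 + rp := by
    intro x; simp only [Phi]; rw [map_add, map_mul, map_intCast]
  have hmap3 : ∀ x : ℤ_[p] × ℤ_[p] × ℤ_[p],
      PadicInt.toZMod (x.1 * x.2.2 + (r : ℤ_[p])) = (Phi p x).2.2 * (Phi p x).1 + rp := by
    intro x; simp only [Phi]; rw [map_add, map_mul, map_intCast]; ring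
  -- bad sets
  set Bad1 : Finset (ZMod p × ZMod p × ZMod p) :=
    Finset.univ.filter (fun t => t.1 * t.2.1 + rp = 0) with hBad1
  set Bad2 : Finset (ZMod p × ZMod p × ZMod p) :=
    Finset.univ.filter (fun t => t.2.1 * t.2.2 + rp = 0) with hBad2
  set Bad3 : Finset (ZMod p × ZMod p × ZMod p) :=
    Finset.univ.filter (fun t => t.2.2 * t.1 + rp = 0) with hBad3
  -- inclusions
  have hsub1 : Phi p ⁻¹' ↑(Tfin rp) ⊆ S := by
    intro x hx
    simp only [Set.mem_preimage, Finset.mem_coe, Tfin, Finset.mem_filter, Finset.mem_univ,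
      true_and] at hx
    obtain ⟨h1, h2, h3⟩ := hx
    refine ⟨?_, ?_, ?_⟩
    · exact isSquare_of_toZMod hp2 _ (by rw [hmap1]; exact h1.1) (by rw [hmap1]; exact h1.2)
    · exact isSquare_of_toZMod hp2 _ (by rw [hmap2]; exact h2.1) (by rw [hmap2]; exact h2.2)
    · exact isSquare_of_toZMod hp2 _ (by rw [hmap3]; exact h3.1) (by rw [hmap3]; exact h3.2)
  have hsub2 : S ⊆ Phi p ⁻¹' ↑(Tfin rp) ∪ (Phi p ⁻¹' ↑Bad1 ∪ (Phi p ⁻¹' ↑Bad2 ∪ Phi p ⁻¹' ↑Bad3)) := by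
    intro x hx
    obtain ⟨hx1, hx2, hx3⟩ := hx
    by_cases hb1 : (Phi p x).1 * (Phi p x).2.1 + rp = 0
    · right; left
      simp only [Set.mem_preimage, Finset.mem_coe, hBad1, Finset.mem_filter, Finset.mem_univ,
        true_and]
      exact hb1
    by_cases hb2 : (Phi p x).2.1 * (Phi p x).2.2 + rp = 0
    · right; right; left
      simp only [Set.mem_preimage, Finset.mem_coe, hBad2, Finset.mem_filter, Finset.mem_univ,
        true_and]
      exact hb2
    by_cases hb3 : (Phi p x).2.2 * (Phi p x).1 + rp = 0
    · right; right; right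
      simp only [Set.mem_preimage, Finset.mem_coe, hBad3, Finset.mem_filter, Finset.mem_univ,
        true_and]
      exact hb3
    left
    simp only [Set.mem_preimage, Finset.mem_coe, Tfin, Finset.mem_filter, Finset.mem_univ,
      true_and]
    refine ⟨⟨hb1, ?_⟩, ⟨hb2, ?_⟩, ⟨hb3, ?_⟩⟩
    · rw [← hmap1]; exact hx1.map PadicInt.toZMod
    · rw [← hmap2]; exact hx2.map PadicInt.toZMod
    · rw [← hmap3]; exact hx3.map PadicInt.toZMod
  -- cardinality bounds for bad sets
  have hcard_ite : ∀ (c : ZMod p × ZMod p × ZMod p → Prop) [DecidablePred c],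
      ((Finset.univ.filter c).card : ℤ)
        = ∑ t : ZMod p × ZMod p × ZMod p, if c t then (1:ℤ) else 0 := by
    intro c _
    rw [Finset.card_filter]
    push_cast
    apply Finset.sum_congr rfl
    intro t _
    split_ifs <;> simp
  have hc1 : (Bad1.card : ℤ) ≤ (p:ℤ)^2 := by
    rw [hBad1, hcard_ite]
    rw [Fintype.sum_prod_type]
    calc ∑ a : ZMod p, ∑ bc : ZMod p × ZMod p,
          (if a * bc.1 + rp = 0 then (1:ℤ) else 0)
        = ∑ a : ZMod p, ∑ b : ZMod p, ∑ _c : ZMod p, (if a * b + rp = 0 then (1:ℤ) else 0) := by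
          apply Finset.sum_congr rfl
          intro a _
          rw [Fintype.sum_prod_type]
      _ ≤ (p:ℤ)^2 := dS1 hr
  have hc2 : (Bad2.card : ℤ) ≤ (p:ℤ)^2 := by
    rw [hBad2, hcard_ite]
    rw [Fintype.sum_prod_type]
    calc ∑ a : ZMod p, ∑ bc : ZMod p × ZMod p,
          (if bc.1 * bc.2 + rp = 0 then (1:ℤ) else 0)
        = ∑ _a : ZMod p, ∑ b : ZMod p, ∑ c : ZMod p, (if b * c + rp = 0 then (1:ℤ) else 0) := by
          apply Finset.sum_congr rfl
          intro a _
          rw [Fintype.sum_prod_type]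
      _ ≤ (p:ℤ)^2 := dS2 hr
  have hc3 : (Bad3.card : ℤ) ≤ (p:ℤ)^2 := by
    rw [hBad3, hcard_ite]
    rw [Fintype.sum_prod_type]
    calc ∑ a : ZMod p, ∑ bc : ZMod p × ZMod p,
          (if bc.2 * a + rp = 0 then (1:ℤ) else 0)
        = ∑ a : ZMod p, ∑ _b : ZMod p, ∑ c : ZMod p, (if c * a + rp = 0 then (1:ℤ) else 0) := by
          apply Finset.sum_congr rfl
          intro a _
          rw [Fintype.sum_prod_type]
      _ ≤ (p:ℤ)^2 := dS3 hr
  -- ennreal facts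
  have hp0 : (p : ENNReal) ≠ 0 := by
    exact_mod_cast hp.pos.ne'
  have hptop : (p : ENNReal) ≠ ⊤ := ENNReal.natCast_ne_top p
  have hid : (p : ENNReal)^2 * ((p : ENNReal)⁻¹)^3 = (p : ENNReal)⁻¹ := by
    have he : (p:ENNReal)^2 * ((p:ENNReal)⁻¹)^3
        = ((p:ENNReal) * (p:ENNReal)⁻¹) * (((p:ENNReal) * (p:ENNReal)⁻¹) * (p:ENNReal)⁻¹) := by
      ring
    rw [he, ENNReal.mul_inv_cancel hp0 hptop, one_mul, one_mul]
  have hbad_meas : ∀ (B : Finset (ZMod p × ZMod p × ZMod p)), (B.card : ℤ) ≤ (p:ℤ)^2 →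
      mu3 p (Phi p ⁻¹' ↑B) ≤ (p : ENNReal)⁻¹ := by
    intro B hB
    rw [mu3_preimage]
    have hBn : B.card ≤ p^2 := by exact_mod_cast hB
    calc (B.card : ENNReal) * ((p : ENNReal)⁻¹)^3
        ≤ (p : ENNReal)^2 * ((p : ENNReal)⁻¹)^3 := by
          apply mul_le_mul_left
          exact_mod_cast Nat.cast_le.mpr hBn
      _ = (p : ENNReal)⁻¹ := hid
  -- measure sandwich
  set q : ENNReal := mu3 p (Phi p ⁻¹' ↑(Tfin rp)) with hqdef
  have hm_lo : q ≤ mu3 p S := measure_mono hsub1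
  have hm_hi : mu3 p S ≤ q + 3 * (p : ENNReal)⁻¹ := by
    calc mu3 p S ≤ mu3 p (Phi p ⁻¹' ↑(Tfin rp) ∪ (Phi p ⁻¹' ↑Bad1 ∪ (Phi p ⁻¹' ↑Bad2 ∪ Phi p ⁻¹' ↑Bad3))) :=
          measure_mono hsub2
      _ ≤ q + mu3 p (Phi p ⁻¹' ↑Bad1 ∪ (Phi p ⁻¹' ↑Bad2 ∪ Phi p ⁻¹' ↑Bad3)) := measure_union_le _ _
      _ ≤ q + (mu3 p (Phi p ⁻¹' ↑Bad1) + (mu3 p (Phi p ⁻¹' ↑Bad2) + mu3 p (Phi p ⁻¹' ↑Bad3))) := by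
          apply add_le_add_right
          calc mu3 p (Phi p ⁻¹' ↑Bad1 ∪ (Phi p ⁻¹' ↑Bad2 ∪ Phi p ⁻¹' ↑Bad3))
              ≤ mu3 p (Phi p ⁻¹' ↑Bad1) + mu3 p (Phi p ⁻¹' ↑Bad2 ∪ Phi p ⁻¹' ↑Bad3) :=
                measure_union_le _ _
            _ ≤ _ := add_le_add_right (measure_union_le _ _) _
      _ ≤ q + ((p : ENNReal)⁻¹ + ((p : ENNReal)⁻¹ + (p : ENNReal)⁻¹)) := by
          apply add_le_add_right
          exact add_le_add (hbad_meas _ hc1) (add_le_add (hbad_meas _ hc2) (hbad_meas _ hc3))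
      _ = q + 3 * (p : ENNReal)⁻¹ := by ring_nf
  -- to real numbers
  have hq_ne : q ≠ ⊤ := measure_ne_top _ _
  have hm_ne : mu3 p S ≠ ⊤ := measure_ne_top _ _
  have hppos : (0:ℝ) < p := by exact_mod_cast hp.pos
  have hqr : q.toReal = ((Tfin rp).card : ℝ) * ((p:ℝ)⁻¹)^3 := by
    rw [hqdef, mu3_preimage]
    rw [ENNReal.toReal_mul, ENNReal.toReal_pow, ENNReal.toReal_inv]
    simp
  have h3p_ne : (3 : ENNReal) * (p : ENNReal)⁻¹ ≠ ⊤ :=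
    ENNReal.mul_ne_top (by norm_num) (ENNReal.inv_ne_top.mpr hp0)
  have hlo' : q.toReal ≤ (mu3 p S).toReal := ENNReal.toReal_mono hm_ne hm_lo
  have hhi' : (mu3 p S).toReal ≤ q.toReal + 3 / p := by
    have h3 : (q + 3 * (p : ENNReal)⁻¹).toReal = q.toReal + 3 / p := by
      rw [ENNReal.toReal_add hq_ne h3p_ne, ENNReal.toReal_mul, ENNReal.toReal_inv]
      norm_num
      rw [div_eq_mul_inv]
    exact le_trans (ENNReal.toReal_mono (ENNReal.add_ne_top.mpr ⟨hq_ne, h3p_ne⟩) hm_hi)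
      (le_of_eq h3)
  have h1R : |(mu3 p S).toReal - q.toReal| ≤ 3 / p := by
    have : (0:ℝ) ≤ 3 / p := by positivity
    rw [abs_le]; constructor <;> linarith
  -- counting estimate
  have hcount := card_main hp2 hr
  have hcountR : |8 * (((Tfin rp).card : ℝ)) - (p:ℝ)^3| ≤ 22 * (p:ℝ)^2 := by
    have := (abs_le.mp hcount)
    rw [abs_le]
    constructor <;> [exact_mod_cast this.1; exact_mod_cast this.2]
  have h2R : |q.toReal - 1/8| ≤ 3 / p := by
    rw [hqr]
    have hkey : ((Tfin rp).card : ℝ) * ((p:ℝ)⁻¹)^3 - 1/8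
        = (8 * (((Tfin rp).card : ℝ)) - (p:ℝ)^3) / (8 * (p:ℝ)^3) := by
      field_simp
    rw [hkey, abs_div, abs_of_pos (by positivity : (0:ℝ) < 8 * (p:ℝ)^3)]
    calc |8 * (((Tfin rp).card : ℝ)) - (p:ℝ)^3| / (8 * (p:ℝ)^3)
        ≤ (22 * (p:ℝ)^2) / (8 * (p:ℝ)^3) := by gcongr
      _ ≤ 3 / (p:ℝ) := by
          rw [div_le_div_iff₀ (by positivity) hppos]
          nlinarith
  calc |(mu3 p S).toReal - 1/8|
      ≤ |(mu3 p S).toReal - q.toReal| + |q.toReal - 1/8| := by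
        have : (mu3 p S).toReal - 1/8 = ((mu3 p S).toReal - q.toReal) + (q.toReal - 1/8) := by
          ring
        rw [this]; exact abs_add_le _ _
    _ ≤ 3 / p + 3 / p := add_le_add h1R h2R
    _ = 6 / p := by ring
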